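/- Let H be a Hilbert space (real or complex), let P : H → H be an orthogonal projection (a bounded self-adjoint operator with P² = P), and let M_k : H → H (k ≥ 1) be bounded operators of the form M_k = P + S_k with ∑_k ‖S_k‖ < ∞ (operator norms). Then: (1) for every k the infinite product R_k = M_k M_{k+1} ⋯ exists, i.e. the finite products M_k M_{k+1} ⋯ M_n converge in operator norm as n → ∞; (2) ker P ⊆ ker R_k for every k; (3) R_k → P in operator norm as k → ∞; (4) there exists N such that ker R_k = ker P for every k ≥ N. -/

import Mathlib

open Filter Topology

/-- The ordered partial product `M k * M (k+1) * ⋯ * M (k+n)`. -/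
def opProd {A : Type*} [Mul A] (M : ℕ → A) (k : ℕ) : ℕ → A
  | 0 => M k
  | n + 1 => opProd M k n * M (k + n + 1)

set_option maxHeartbeats 1600000 in
/-- Convergence of infinite products of almost-projectors on a Hilbert space: if
`M k = P + S k` with `P` an orthogonal projection (bounded, self-adjoint, idempotent) and
`∑ ‖S k‖ < ∞`, then the infinite products `R k = M k * M (k+1) * ⋯` exist (in operator norm),
`ker P ⊆ ker (R k)` for all `k`, `R k → P` in operator norm, and `ker (R k) = ker P` for all
sufficiently large `k`. -/
theorem inf_product_of_almost_projectors
    {𝕜 : Type*} [RCLike 𝕜] {H : Type*} [NormedAddCommGroup H]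
    [InnerProductSpace 𝕜 H] [CompleteSpace H]
    (P : H →L[𝕜] H) (hP_sa : IsSelfAdjoint P) (hP_idem : P * P = P)
    (S M : ℕ → H →L[𝕜] H)
    (hM : ∀ k, M k = P + S k) (hS : Summable fun k => ‖S k‖) :
    ∃ R : ℕ → H →L[𝕜] H,
      (∀ k, Tendsto (fun n => opProd M k n) atTop (nhds (R k))) ∧
      (∀ k, LinearMap.ker (P : H →ₗ[𝕜] H) ≤ LinearMap.ker (R k : H →ₗ[𝕜] H)) ∧
      Tendsto R atTop (nhds P) ∧
      ∃ N : ℕ, ∀ k ≥ N, LinearMap.ker (R k : H →ₗ[𝕜] H) = LinearMap.ker (P : H →ₗ[𝕜] H) := by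
  classical
  -- ‖P‖ ≤ 1
  have hPnorm : ‖P‖ ≤ 1 := by
    have h1 : ‖(ContinuousLinearMap.adjoint P).comp P‖ = ‖P‖ * ‖P‖ :=
      ContinuousLinearMap.norm_adjoint_comp_self P
    rw [hP_sa.adjoint_eq] at h1
    have h2 : P.comp P = P := hP_idem
    rw [h2] at h1
    nlinarith [norm_nonneg P]
  -- tail sums
  set e : ℕ → ℝ := fun k => ∑' j, ‖S (j + k)‖ with he_def
  have hSk : ∀ k, Summable fun j => ‖S (j + k)‖ := fun k => (summable_nat_add_iff k).2 hS
  have he0 : ∀ k, 0 ≤ e k := fun k => tsum_nonneg fun j => norm_nonneg _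
  have he_tendsto : Tendsto e atTop (𝓝 0) := tendsto_sum_nat_add fun j => ‖S j‖
  have hsum_le : ∀ k n, (∑ j ∈ Finset.range n, ‖S (k + j)‖) ≤ e k := by
    intro k n
    calc ∑ j ∈ Finset.range n, ‖S (k + j)‖ = ∑ j ∈ Finset.range n, ‖S (j + k)‖ := by
          refine Finset.sum_congr rfl fun j _ => by rw [add_comm]
      _ ≤ e k := Summable.sum_le_tsum (Finset.range n) (fun i _ => norm_nonneg _) (hSk k)
  -- key norm bound on partial products
  have hQbound' : ∀ k n, ‖opProd M k n - P‖ ≤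
      Real.exp (∑ j ∈ Finset.range (n + 1), ‖S (k + j)‖) - 1 := by
    intro k n
    induction n with
    | zero =>
      have h1 : opProd M k 0 - P = S k := by
        show M k - P = S k
        rw [hM k]; abel
      rw [h1]
      have := Real.add_one_le_exp ‖S k‖
      rw [Finset.sum_range_one]
      simp only [Nat.add_zero]
      linarith
    | succ n ih =>
      have h1 : opProd M k (n + 1) - P
          = (opProd M k n - P) * P + opProd M k n * S (k + n + 1) := by
        show opProd M k n * M (k + n + 1) - P = _
        rw [hM (k + n + 1), sub_mul, hP_idem]
        noncomm_ring
      have h2 : ‖opProd M k (n + 1) - P‖ ≤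
          ‖opProd M k n - P‖ * ‖P‖ + ‖opProd M k n‖ * ‖S (k + n + 1)‖ := by
        rw [h1]
        exact (norm_add_le _ _).trans (add_le_add (norm_mul_le _ _) (norm_mul_le _ _))
      have hQn : ‖opProd M k n‖ ≤ ‖opProd M k n - P‖ + 1 := by
        calc ‖opProd M k n‖ = ‖(opProd M k n - P) + P‖ := by rw [sub_add_cancel]
          _ ≤ ‖opProd M k n - P‖ + ‖P‖ := norm_add_le _ _
          _ ≤ _ := by linarith
      have hsum : ∑ j ∈ Finset.range (n + 2), ‖S (k + j)‖
          = (∑ j ∈ Finset.range (n + 1), ‖S (k + j)‖) + ‖S (k + n + 1)‖ := by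
        rw [Finset.sum_range_succ, ← add_assoc]
      rw [hsum, Real.exp_add]
      set a := ‖opProd M k n - P‖
      set s := ‖S (k + n + 1)‖
      set E := Real.exp (∑ j ∈ Finset.range (n + 1), ‖S (k + j)‖) with hE_def
      have hEpos : 0 < E := Real.exp_pos _
      have hes : s + 1 ≤ Real.exp s := Real.add_one_le_exp s
      have hs0 : 0 ≤ s := norm_nonneg _
      have ha0 : 0 ≤ a := norm_nonneg _
      have hP0 : 0 ≤ ‖P‖ := norm_nonneg _
      have c1 : a * ‖P‖ ≤ a := by nlinarith
      have c2 : ‖opProd M k n‖ * s ≤ (a + 1) * s := by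
        exact mul_le_mul_of_nonneg_right hQn hs0
      have c3 : (a + 1) * s ≤ E * s := by nlinarith
      have c4 : E * s ≤ E * (Real.exp s - 1) := by nlinarith
      nlinarith [h2]
  have hQP : ∀ k n, ‖opProd M k n - P‖ ≤ Real.exp (e k) - 1 := by
    intro k n
    refine (hQbound' k n).trans ?_
    have h1 := Real.exp_le_exp.2 (hsum_le k (n + 1))
    linarith
  have hQnorm : ∀ k n, ‖opProd M k n‖ ≤ Real.exp (e k) := by
    intro k n
    calc ‖opProd M k n‖ = ‖(opProd M k n - P) + P‖ := by rw [sub_add_cancel]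
      _ ≤ ‖opProd M k n - P‖ + ‖P‖ := norm_add_le _ _
      _ ≤ (Real.exp (e k) - 1) + 1 := add_le_add (hQP k n) hPnorm
      _ = Real.exp (e k) := by ring
  -- algebraic identities
  have hMP : ∀ j, M j * (P - 1) = S j * (P - 1) := by
    intro j
    rw [hM j, add_mul, mul_sub, hP_idem, mul_one, sub_self, zero_add]
  have hone : ‖(1 : H →L[𝕜] H)‖ ≤ 1 := by
    rw [ContinuousLinearMap.one_def]; exact ContinuousLinearMap.norm_id_le
  have hP1 : ‖P - (1 : H →L[𝕜] H)‖ ≤ 2 := by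
    calc ‖P - (1 : H →L[𝕜] H)‖ ≤ ‖P‖ + ‖(1 : H →L[𝕜] H)‖ := norm_sub_le _ _
      _ ≤ 2 := by linarith
  have hexp1 : ∀ k, (1 : ℝ) ≤ Real.exp (e k) := fun k => Real.one_le_exp (he0 k)
  have hQPle : ∀ k n, ‖opProd M k n * (P - 1)‖ ≤ Real.exp (e k) * (2 * ‖S (k + n)‖) := by
    intro k n
    match n with
    | 0 =>
      have h1 : opProd M k 0 * (P - 1) = S k * (P - 1) := hMP k
      rw [h1]
      have := (norm_mul_le (S k) (P - 1)).trans
        (mul_le_mul_of_nonneg_left hP1 (norm_nonneg (S k)))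
      have h2 : (1 : ℝ) ≤ Real.exp (e k) := hexp1 k
      have h3 : 0 ≤ ‖S k‖ := norm_nonneg _
      simp only [Nat.add_zero]
      nlinarith
    | n + 1 =>
      have h1 : opProd M k (n + 1) * (P - 1) = opProd M k n * (S (k + n + 1) * (P - 1)) := by
        show (opProd M k n * M (k + n + 1)) * (P - 1) = _
        rw [mul_assoc, hMP]
      rw [h1]
      calc ‖opProd M k n * (S (k + n + 1) * (P - 1))‖
          ≤ ‖opProd M k n‖ * ‖S (k + n + 1) * (P - 1)‖ := norm_mul_le _ _
        _ ≤ ‖opProd M k n‖ * (‖S (k + n + 1)‖ * ‖P - 1‖) := by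
            exact mul_le_mul_of_nonneg_left (norm_mul_le _ _) (norm_nonneg _)
        _ ≤ Real.exp (e k) * (2 * ‖S (k + n + 1)‖) := by
            have h2 := hQnorm k n
            have h3 : 0 ≤ ‖S (k + n + 1)‖ := norm_nonneg _
            have h5 : ‖S (k + n + 1)‖ * ‖P - (1 : H →L[𝕜] H)‖ ≤ 2 * ‖S (k + n + 1)‖ := by
              nlinarith [norm_nonneg (P - (1 : H →L[𝕜] H))]
            exact mul_le_mul h2 h5 (by positivity) (Real.exp_pos _).le
  -- summable shifts
  have hshift : ∀ k, Summable fun n => ‖S (k + n)‖ := by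
    intro k
    have := (summable_nat_add_iff k).2 hS
    refine this.congr fun n => by rw [add_comm]
  -- convergence of partial products
  have hconv : ∀ k, ∃ L, Tendsto (fun n => opProd M k n) atTop (𝓝 L) := by
    intro k
    set D : ℕ → H →L[𝕜] H := fun n => opProd M k (n + 1) - opProd M k n with hD_def
    have hDb : ∀ n, ‖D n‖ ≤
        Real.exp (e k) * (2 * ‖S (k + n)‖) + Real.exp (e k) * ‖S (k + n + 1)‖ := by
      intro n
      have h1 : D n = opProd M k n * (P - 1) + opProd M k n * S (k + n + 1) := by
        show opProd M k n * M (k + n + 1) - opProd M k n = _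
        rw [hM (k + n + 1)]
        noncomm_ring
      rw [h1]
      refine (norm_add_le _ _).trans (add_le_add (hQPle k n) ?_)
      exact (norm_mul_le _ _).trans
        (mul_le_mul_of_nonneg_right (hQnorm k n) (norm_nonneg _))
    have hg : Summable fun n =>
        Real.exp (e k) * (2 * ‖S (k + n)‖) + Real.exp (e k) * ‖S (k + n + 1)‖ := by
      have h1 : Summable fun n => ‖S (k + n + 1)‖ := by
        refine (hshift (k + 1)).congr fun n => ?_
        rw [show k + 1 + n = k + n + 1 by omega]
      exact (((hshift k).mul_left 2).mul_left _).add (h1.mul_left _)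
    have hDsum : Summable D := Summable.of_norm_bounded hg hDb
    have htel : ∀ n, opProd M k n = opProd M k 0 + ∑ m ∈ Finset.range n, D m := by
      intro n
      induction n with
      | zero => simp
      | succ n ih =>
        rw [Finset.sum_range_succ, ← add_assoc, ← ih]
        show _ = opProd M k n + (opProd M k (n + 1) - opProd M k n)
        rw [add_sub_cancel]
    refine ⟨opProd M k 0 + ∑' m, D m, ?_⟩
    have h3 : Tendsto (fun n => opProd M k 0 + ∑ m ∈ Finset.range n, D m) atTop
        (𝓝 (opProd M k 0 + ∑' m, D m)) :=
      tendsto_const_nhds.add hDsum.hasSum.tendsto_sum_nat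
    exact h3.congr fun n => (htel n).symm
  choose R hR using hconv
  -- norm bound on R k - P
  have hRlim : ∀ k, ‖R k - P‖ ≤ Real.exp (e k) - 1 := by
    intro k
    have h1 : Tendsto (fun n => ‖opProd M k n - P‖) atTop (𝓝 ‖R k - P‖) :=
      ((hR k).sub tendsto_const_nhds).norm
    exact le_of_tendsto h1 (Eventually.of_forall fun n => hQP k n)
  -- R k * (P - 1) = 0
  have hRP : ∀ k, R k * (P - 1) = 0 := by
    intro k
    have h1 : Tendsto (fun n => opProd M k n * (P - 1)) atTop (𝓝 (R k * (P - 1))) :=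
      (hR k).mul tendsto_const_nhds
    have h3 : Tendsto (fun n => ‖S (k + n)‖) atTop (𝓝 0) := by
      have h4 := hS.tendsto_atTop_zero
      have := h4.comp (tendsto_add_atTop_nat k)
      refine this.congr fun n => ?_
      simp [Function.comp, add_comm]
    have h2 : Tendsto (fun n => opProd M k n * (P - 1)) atTop (𝓝 0) := by
      refine squeeze_zero_norm (fun n => hQPle k n) ?_
      have h5 : Tendsto (fun n => Real.exp (e k) * (2 * ‖S (k + n)‖)) atTop
          (𝓝 (Real.exp (e k) * (2 * 0))) :=
        tendsto_const_nhds.mul (tendsto_const_nhds.mul h3)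
      simpa using h5
    exact tendsto_nhds_unique h1 h2
  have hRid : ∀ k, R k * P = R k := by
    intro k
    have h1 := hRP k
    rw [mul_sub, mul_one, sub_eq_zero] at h1
    exact h1
  -- kernels
  have hker : ∀ k, LinearMap.ker (P : H →ₗ[𝕜] H) ≤ LinearMap.ker (R k : H →ₗ[𝕜] H) := by
    intro k x hx
    have hPx : P x = 0 := LinearMap.mem_ker.mp hx
    have h1 : R k x = 0 := by
      calc R k x = (R k * P) x := by rw [hRid k]
        _ = R k (P x) := rfl
        _ = 0 := by rw [hPx]; simp
    exact LinearMap.mem_ker.mpr h1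
  -- R → P
  have hRtendsto : Tendsto R atTop (𝓝 P) := by
    have hg : Tendsto (fun k => Real.exp (e k) - 1) atTop (𝓝 0) := by
      have h1 := (Real.continuous_exp.tendsto 0).comp he_tendsto
      have h2 := h1.sub (tendsto_const_nhds (x := (1 : ℝ)))
      simpa using h2
    exact tendsto_sub_nhds_zero_iff.mp (squeeze_zero_norm (fun k => hRlim k) hg)
  -- eventual kernel equality
  have hlog : (0 : ℝ) < Real.log 2 := Real.log_pos (by norm_num)
  have hNev : ∀ᶠ k in atTop, e k < Real.log 2 := he_tendsto.eventually (gt_mem_nhds hlog)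
  obtain ⟨N, hN⟩ := eventually_atTop.mp hNev
  refine ⟨R, hR, hker, hRtendsto, N, fun k hk => ?_⟩
  have hlt : ‖R k - P‖ < 1 := by
    have h1 := hRlim k
    have h2 : Real.exp (e k) < Real.exp (Real.log 2) := Real.exp_lt_exp.2 (hN k hk)
    rw [Real.exp_log (by norm_num : (0:ℝ) < 2)] at h2
    linarith
  refine le_antisymm (fun x hx => ?_) (hker k)
  have hx0 : R k x = 0 := LinearMap.mem_ker.mp hx
  have h1 : R k (P x) = 0 := by
    have h2 : (R k * P) x = R k x := by rw [hRid k]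
    rw [ContinuousLinearMap.mul_apply] at h2
    rw [h2, hx0]
  have h2 : P (P x) = P x := by
    calc P (P x) = (P * P) x := rfl
      _ = P x := by rw [hP_idem]
  have h3 : ‖P x‖ ≤ ‖R k - P‖ * ‖P x‖ := by
    calc ‖P x‖ = ‖R k (P x) - P (P x)‖ := by rw [h1, h2, zero_sub, norm_neg]
      _ = ‖(R k - P) (P x)‖ := by rw [ContinuousLinearMap.sub_apply]
      _ ≤ ‖R k - P‖ * ‖P x‖ := (R k - P).le_opNorm _
  have h4 : ‖P x‖ ≤ 0 := by nlinarith [norm_nonneg (P x), norm_nonneg (R k - P)]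
  have h5 : P x = 0 := norm_eq_zero.mp (le_antisymm h4 (norm_nonneg _))
  exact LinearMap.mem_ker.mpr h5
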